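/- For every integer n ≥ 1: f_4(n) ≡ 1 (mod 3) if n = 3^m or n = 2·3^m for some integer m ≥ 0; f_4(n) ≡ 2 (mod 3) if n = 3^a + 3^b for some integers a > b ≥ 0; and f_4(n) ≡ 0 (mod 3) in all other cases. -/

import Mathlib

open Finset

/-- `f₄(n) = Σ_{i=n-1}^{2n-2} C(3n-1, n+i+1)·C(i, n-1)` for `n ≥ 1`. -/
def f4 (n : ℕ) : ℕ :=
  ∑ i ∈ Finset.Icc (n - 1) (2 * n - 2), (3 * n - 1).choose (n + i + 1) * i.choose (n - 1)

open Polynomial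

abbrev R3 := Polynomial (ZMod 3)

def S (A b m : ℕ) : ℕ := ∑ k ∈ Finset.range (m+1), A.choose k * (b + m - k).choose (m - k)

/-- Coefficients of `(1-X)^(3^t - n)` are ascending binomials, below degree `3^t`. -/
lemma coeff_one_sub_X_pow (t : ℕ) :
    ∀ n ≤ 3^t, ∀ j < 3^t, ((1 - X : R3)^(3^t - n)).coeff j = ((n + j - 1).choose j : ZMod 3) := by
  intro n
  induction n with
  | zero =>
    intro _ j hj
    have h1 : ((1:R3) - X)^(3^t) = 1 - X^(3^t) := by
      simpa using sub_pow_char_pow (1:R3) X t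
    rcases Nat.eq_zero_or_pos j with rfl | hj0
    · simp [h1]
      omega
    · have hch : (0 + j - 1).choose j = 0 := Nat.choose_eq_zero_of_lt (by omega)
      rw [Nat.sub_zero, h1, hch, Polynomial.coeff_sub, Polynomial.coeff_one,
        Polynomial.coeff_X_pow, if_neg (by omega : ¬ j = 0), if_neg (by omega : ¬ j = 3^t)]
      simp
  | succ n ih =>
    intro hn j hj
    have hn' : n ≤ 3^t := by omega
    have hprod : ((1:R3) - X)^(3^t - n) = ((1 - X)^(3^t - (n+1))) * (1 - X) := by
      rw [← pow_succ]; congr 1; omega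
    induction j with
    | zero =>
      have h0 : (((1:R3) - X)^(3^t - (n+1))).coeff 0 = 1 := by
        rw [Polynomial.coeff_zero_eq_eval_zero]; simp
      simpa using h0
    | succ j ihj =>
      have hj' : j < 3^t := by omega
      have hIH : (((1:R3) - X)^(3^t - (n+1))).coeff j = ((n + j).choose j : ZMod 3) := by
        simpa using ihj hj'
      have houter : (((1:R3) - X)^(3^t - n)).coeff (j+1) = ((n + j).choose (j+1) : ZMod 3) := by
        rw [ih hn' (j+1) hj, show n + (j+1) - 1 = n + j by omega]
      rw [hprod] at houter
      have hexp : (((1 - X :R3)^(3^t - (n+1))) * (1 - X)).coeff (j+1)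
          = (((1 - X:R3))^(3^t - (n+1))).coeff (j+1) - (((1 - X:R3))^(3^t - (n+1))).coeff j := by
        rw [mul_sub, mul_one, Polynomial.coeff_sub, Polynomial.coeff_mul_X]
      rw [hexp, hIH] at houter
      have hgoal : (n + 1 + (j+1) - 1).choose (j+1) = (n+j).choose (j+1) + (n+j).choose j := by
        rw [show n + 1 + (j+1) - 1 = (n+j)+1 by omega]
        rw [Nat.choose_succ_succ (n+j) j]
        simp only [Nat.succ_eq_add_one]
        omega
      rw [hgoal]
      push_cast
      linear_combination houter

/-- Representation of `S` as a polynomial coefficient over `ZMod 3`. -/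
lemma S_rep (A b m t : ℕ) (hb : b + 1 ≤ 3^t) (hm : m < 3^t) :
    ((S A b m : ℕ) : ZMod 3)
      = (((X+1)^A * (1-X)^(3^t - (b+1)) : R3)).coeff m := by
  rw [Polynomial.coeff_mul, Finset.Nat.sum_antidiagonal_eq_sum_range_succ_mk]
  rw [S, Nat.cast_sum]
  refine Finset.sum_congr rfl ?_
  intro k hk
  simp only [Finset.mem_range] at hk
  rw [Polynomial.coeff_X_add_one_pow, coeff_one_sub_X_pow t (b+1) hb (m-k) (by omega)]
  rw [show b + 1 + (m - k) - 1 = b + (m - k) by omega]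
  rw [show b + m - k = b + (m-k) by omega]
  push_cast
  ring

lemma coeff_expand_mul (W Q : R3) (hQ : Q.natDegree ≤ 5) (i j : ℕ) (hj : j < 3)
    (h3 : Q.coeff (j+3) = 0) :
    ((Polynomial.expand (ZMod 3) 3 W) * Q).coeff (3*i+j) = W.coeff i * Q.coeff j := by
  rw [Polynomial.coeff_mul, Finset.Nat.sum_antidiagonal_eq_sum_range_succ_mk]
  rw [Finset.sum_eq_single (3*i)]
  · rw [Polynomial.coeff_expand (by norm_num), if_pos ⟨i, rfl⟩,
      Nat.mul_div_cancel_left i (by norm_num : 0 < 3),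
      show 3*i+j - 3*i = j by omega]
  · intro k hk hne
    simp only [Finset.mem_range] at hk
    rw [Polynomial.coeff_expand (by norm_num)]
    by_cases hdvd : 3 ∣ k
    · rw [if_pos hdvd]
      obtain ⟨u, rfl⟩ := hdvd
      have hu : u < i := by omega
      rcases Nat.lt_or_ge u (i-1) with hu2 | hu2
      · rw [Polynomial.coeff_eq_zero_of_natDegree_lt (by omega : Q.natDegree < 3*i+j - 3*u),
          mul_zero]
      · rw [show 3*i+j - 3*u = j + 3 by omega, h3, mul_zero]
    · rw [if_neg hdvd, zero_mul]
  · intro h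
    exact absurd (Finset.mem_range.2 (by omega)) h

lemma expand_pow_prod (a b : ℕ) :
    (Polynomial.expand (ZMod 3) 3 ((X+1)^a * (1-X)^b)) = ((X+1)^(3*a) * (1-X)^(3*b) : R3) := by
  rw [map_mul, map_pow, map_pow, map_add, map_sub, map_one, expand_X]
  have h1 : (X^3 + 1 : R3) = (X+1)^3 := by
    rw [add_pow_char (X:R3) 1 3]; norm_num
  have h2 : ((1:R3) - X^3) = (1-X)^3 := by
    rw [sub_pow_char (1:R3) X]; norm_num
  rw [h1, h2, ← pow_mul, ← pow_mul]

lemma natdeg_Q (da db : ℕ) : (((X+1)^da * (1-X)^db : R3)).natDegree ≤ da + db := by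
  refine (Polynomial.natDegree_mul_le).trans (add_le_add ?_ ?_)
  · refine (Polynomial.natDegree_pow_le).trans ?_
    have : ((X:R3)+1).natDegree ≤ 1 := by compute_degree
    calc da * ((X:R3)+1).natDegree ≤ da * 1 := Nat.mul_le_mul_left da this
      _ = da := by omega
  · refine (Polynomial.natDegree_pow_le).trans ?_
    have : ((1:R3)-X).natDegree ≤ 1 := by compute_degree
    calc db * ((1:R3)-X).natDegree ≤ db * 1 := Nat.mul_le_mul_left db this
      _ = db := by omega

lemma coeff_prod_split (a b da db i j : ℕ) (hj : j < 3) (hdeg : da + db ≤ 5)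
    (h3 : (((X+1)^da * (1-X)^db : R3)).coeff (j+3) = 0) :
    (((X+1)^(3*a+da) * (1-X)^(3*b+db) : R3)).coeff (3*i+j)
      = ((X+1)^a * (1-X)^b : R3).coeff i * ((X+1)^da * (1-X)^db : R3).coeff j := by
  have key : ((X+1)^(3*a+da) * (1-X)^(3*b+db) : R3)
      = (Polynomial.expand (ZMod 3) 3 ((X+1)^a * (1-X)^b)) * ((X+1)^da * (1-X)^db) := by
    rw [expand_pow_prod, pow_add, pow_add]; ring
  rw [key]
  exact coeff_expand_mul _ _ ((natdeg_Q da db).trans hdeg) i j hj h3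

lemma coeff_expand_mul_X3 (W : R3) (i : ℕ) :
    ((Polynomial.expand (ZMod 3) 3 W) * X^3).coeff (3*(i+1)) = W.coeff i := by
  have h : (Polynomial.expand (ZMod 3) 3 W) * X^3 = Polynomial.expand (ZMod 3) 3 (W * X) := by
    rw [map_mul, expand_X]
  rw [h, Polynomial.coeff_expand (by norm_num), if_pos ⟨i+1, rfl⟩,
    Nat.mul_div_cancel_left (i+1) (by norm_num : 0 < 3), Polynomial.coeff_mul_X]

lemma f4_eq_S (n : ℕ) (hn : 1 ≤ n) : f4 n = S (3*n-1) (n-1) (n-1) := by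
  rw [f4, S, show n - 1 + 1 = n by omega]
  refine Finset.sum_nbij' (i := fun a => 2*n-2-a) (j := fun k => 2*n-2-k) ?_ ?_ ?_ ?_ ?_
  · intro a ha; simp only [Finset.mem_Icc] at ha; simp only [Finset.mem_range]; omega
  · intro k hk; simp only [Finset.mem_range] at hk; simp only [Finset.mem_Icc]; omega
  · intro a ha; simp only [Finset.mem_Icc] at ha; omega
  · intro k hk; simp only [Finset.mem_range] at hk; omega
  · intro a ha
    simp only [Finset.mem_Icc] at ha
    have h1 : (3*n-1).choose (n+a+1) = (3*n-1).choose (2*n-2-a) := by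
      rw [← Nat.choose_symm (by omega : n+a+1 ≤ 3*n-1), show 3*n-1-(n+a+1) = 2*n-2-a by omega]
    have h2 : a.choose (n-1) = a.choose (a - (n-1)) := by
      rw [Nat.choose_symm (by omega : n-1 ≤ a)]
    have e1 : (n-1) + (n-1) - (2*n-2-a) = a := by omega
    have e2 : (n-1) - (2*n-2-a) = a - (n-1) := by omega
    rw [e1, e2, h1, h2]

-- primed versions
lemma coeff_prod_split' (A B m a b da db i j : ℕ) (hj : j < 3) (hdeg : da + db ≤ 5)
    (hA : A = 3*a+da) (hB : B = 3*b+db) (hm : m = 3*i+j)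
    (h3 : (((X+1)^da * (1-X)^db : R3)).coeff (j+3) = 0) :
    (((X+1)^A * (1-X)^B : R3)).coeff m
      = ((X+1)^a * (1-X)^b : R3).coeff i * ((X+1)^da * (1-X)^db : R3).coeff j := by
  subst hA hB hm; exact coeff_prod_split a b da db i j hj hdeg h3

lemma coeff_expand_mul' (W Q : R3) (hQ : Q.natDegree ≤ 5) (m i j : ℕ) (hj : j < 3)
    (hm : m = 3*i+j) (h3 : Q.coeff (j+3) = 0) :
    ((Polynomial.expand (ZMod 3) 3 W) * Q).coeff m = W.coeff i * Q.coeff j := by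
  subst hm; exact coeff_expand_mul W Q hQ i j hj h3

lemma coeff_expand_mul_X3' (W : R3) (m i : ℕ) (hm : m = 3*(i+1)) :
    ((Polynomial.expand (ZMod 3) 3 W) * X^3).coeff m = W.coeff i := by
  subst hm; exact coeff_expand_mul_X3 W i

def g4 (n : ℕ) : ℕ := S (3*n) n n
def e4 (n : ℕ) : ℕ := S (3*n+1) n n
def h4 (n : ℕ) : ℕ := S (3*n) n (n-1)

lemma c_rep (n t : ℕ) (hn : 1 ≤ n) (h : n ≤ 3^t) :
    ((f4 n : ℕ) : ZMod 3) = (((X+1)^(3*n-1) * (1-X)^(3^t - n) : R3)).coeff (n-1) := by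
  rw [f4_eq_S n hn, S_rep (3*n-1) (n-1) (n-1) t (by omega) (by omega),
    show n-1+1 = n by omega]

lemma d_rep (n t : ℕ) (h : n+1 ≤ 3^t) :
    ((g4 n : ℕ) : ZMod 3) = (((X+1)^(3*n) * (1-X)^(3^t - (n+1)) : R3)).coeff n :=
  S_rep (3*n) n n t h (by omega)

lemma e_rep (n t : ℕ) (h : n+1 ≤ 3^t) :
    ((e4 n : ℕ) : ZMod 3) = (((X+1)^(3*n+1) * (1-X)^(3^t - (n+1)) : R3)).coeff n :=
  S_rep (3*n+1) n n t h (by omega)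

lemma f_rep (n t : ℕ) (h : n+1 ≤ 3^t) :
    ((h4 n : ℕ) : ZMod 3) = (((X+1)^(3*n) * (1-X)^(3^t - (n+1)) : R3)).coeff (n-1) :=
  S_rep (3*n) n (n-1) t h (by omega)

section recurrences
variable (n : ℕ)

lemma recC0 (hn : 1 ≤ n) : ((f4 (3*n) : ℕ) : ZMod 3) = (f4 n : ZMod 3) := by
  have hp : (3:ℕ)^(n+2) = 3*3^(n+1) := by ring
  have hn1 : n+1 ≤ 3^(n+1) := (Nat.lt_pow_self (n := n+1) (by norm_num : 1 < 3)).le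
  have hq : ((X+1)^2 * (1-X)^0 : R3) = (X+1)^2 := by ring
  rw [c_rep (3*n) (n+2) (by omega) (by omega),
    coeff_prod_split' (3*(3*n)-1) (3^(n+2)-(3*n)) (3*n-1) (3*n-1) (3^(n+1)-n) 2 0 (n-1) 2
      (by norm_num) (by norm_num) (by omega) (by omega) (by omega)
      (by rw [hq, Polynomial.coeff_X_add_one_pow, Nat.choose_eq_zero_of_lt (by norm_num)]; simp),
    ← c_rep n (n+1) hn (by omega), hq]
  rw [Polynomial.coeff_X_add_one_pow, Nat.choose_self]
  simp

lemma recC1 : ((f4 (3*n+1) : ℕ) : ZMod 3) = (g4 n : ZMod 3) := by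
  have hp : (3:ℕ)^(n+2) = 3*3^(n+1) := by ring
  have hn1 : n+1 ≤ 3^(n+1) := (Nat.lt_pow_self (n := n+1) (by norm_num : 1 < 3)).le
  have h3 : (3:R3) = 0 := by exact_mod_cast CharP.cast_eq_zero R3 3
  have hq : ((X+1)^2 * (1-X)^2 : R3) = 1 + X^2 + X^4 := by linear_combination (-(X^2) : R3) * h3
  rw [c_rep (3*n+1) (n+2) (by omega) (by omega),
    coeff_prod_split' (3*(3*n+1)-1) (3^(n+2)-(3*n+1)) (3*n+1-1) (3*n) (3^(n+1)-(n+1)) 2 2 n 0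
      (by norm_num) (by norm_num) (by omega) (by omega) (by omega)
      (by rw [hq]; simp [Polynomial.coeff_one, Polynomial.coeff_X_pow]),
    ← d_rep n (n+1) hn1, hq]
  simp [Polynomial.coeff_one, Polynomial.coeff_X_pow]

lemma recC2 : ((f4 (3*n+2) : ℕ) : ZMod 3) = (e4 n : ZMod 3) := by
  have hp : (3:ℕ)^(n+2) = 3*3^(n+1) := by ring
  have hn1 : n+1 ≤ 3^(n+1) := (Nat.lt_pow_self (n := n+1) (by norm_num : 1 < 3)).le
  have hq : ((X+1)^2 * (1-X)^1 : R3) = 1 + X - X^2 - X^3 := by ring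
  rw [c_rep (3*n+2) (n+2) (by omega) (by omega),
    coeff_prod_split' (3*(3*n+2)-1) (3^(n+2)-(3*n+2)) (3*n+2-1) (3*n+1) (3^(n+1)-(n+1)) 2 1 n 1
      (by norm_num) (by norm_num) (by omega) (by omega) (by omega)
      (by rw [hq]; simp [Polynomial.coeff_one, Polynomial.coeff_X, Polynomial.coeff_X_pow]),
    ← e_rep n (n+1) hn1, hq]
  simp [Polynomial.coeff_one, Polynomial.coeff_X, Polynomial.coeff_X_pow]

lemma recD0 : ((g4 (3*n) : ℕ) : ZMod 3) = (g4 n : ZMod 3) := by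
  have hp : (3:ℕ)^(n+2) = 3*3^(n+1) := by ring
  have hn1 : n+1 ≤ 3^(n+1) := (Nat.lt_pow_self (n := n+1) (by norm_num : 1 < 3)).le
  have h3 : (3:R3) = 0 := by exact_mod_cast CharP.cast_eq_zero R3 3
  have hq : ((X+1)^0 * (1-X)^2 : R3) = 1 + X + X^2 := by linear_combination (-(X) : R3) * h3
  rw [d_rep (3*n) (n+2) (by omega),
    coeff_prod_split' (3*(3*n)) (3^(n+2)-(3*n+1)) (3*n) (3*n) (3^(n+1)-(n+1)) 0 2 n 0
      (by norm_num) (by norm_num) (by omega) (by omega) (by omega)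
      (by rw [hq]; simp [Polynomial.coeff_one, Polynomial.coeff_X, Polynomial.coeff_X_pow]),
    ← d_rep n (n+1) hn1, hq]
  simp [Polynomial.coeff_one, Polynomial.coeff_X, Polynomial.coeff_X_pow]

lemma recD1 : ((g4 (3*n+1) : ℕ) : ZMod 3) = 2 * (e4 n : ZMod 3) := by
  have hp : (3:ℕ)^(n+2) = 3*3^(n+1) := by ring
  have hn1 : n+1 ≤ 3^(n+1) := (Nat.lt_pow_self (n := n+1) (by norm_num : 1 < 3)).le
  have hq : ((X+1)^0 * (1-X)^1 : R3) = 1 - X := by ring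
  rw [d_rep (3*n+1) (n+2) (by omega),
    coeff_prod_split' (3*(3*n+1)) (3^(n+2)-(3*n+2)) (3*n+1) (3*n+1) (3^(n+1)-(n+1)) 0 1 n 1
      (by norm_num) (by norm_num) (by omega) (by omega) (by omega)
      (by rw [hq]; simp [Polynomial.coeff_one, Polynomial.coeff_X]),
    ← e_rep n (n+1) hn1, hq]
  have hc : ((1:R3) - X).coeff 1 = -1 := by
    simp [Polynomial.coeff_one, Polynomial.coeff_X]
  rw [hc, show (2 : ZMod 3) = -1 by decide]
  ring

lemma recD2 : ((g4 (3*n+2) : ℕ) : ZMod 3) = 0 := by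
  have hp : (3:ℕ)^(n+2) = 3*3^(n+1) := by ring
  have hn1 : n+1 ≤ 3^(n+1) := (Nat.lt_pow_self (n := n+1) (by norm_num : 1 < 3)).le
  have hq : ((X+1)^0 * (1-X)^0 : R3) = 1 := by ring
  rw [d_rep (3*n+2) (n+2) (by omega),
    coeff_prod_split' (3*(3*n+2)) (3^(n+2)-(3*n+3)) (3*n+2) (3*n+2) (3^(n+1)-(n+1)) 0 0 n 2
      (by norm_num) (by norm_num) (by omega) (by omega) (by omega)
      (by rw [hq]; simp [Polynomial.coeff_one]),
    hq]
  simp [Polynomial.coeff_one]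

lemma recE0 (hn : 1 ≤ n) :
    ((e4 (3*n) : ℕ) : ZMod 3) = (g4 n : ZMod 3) + (h4 n : ZMod 3) := by
  have hp : (3:ℕ)^(n+2) = 3*3^(n+1) := by ring
  have hn1 : n+1 ≤ 3^(n+1) := (Nat.lt_pow_self (n := n+1) (by norm_num : 1 < 3)).le
  rw [e_rep (3*n) (n+2) (by omega)]
  rw [show 3^(n+2) - (3*n+1) = 3*(3^(n+1)-(n+1)) + 2 by omega]
  have key : ∀ a b : ℕ, ((X+1)^(3*a+1) * (1-X)^(3*b+2) : R3)
      = (Polynomial.expand (ZMod 3) 3 ((X+1)^a * (1-X)^b)) * (1 - X - X^2)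
        + (Polynomial.expand (ZMod 3) 3 ((X+1)^a * (1-X)^b)) * X^3 := by
    intro a b
    rw [expand_pow_prod]
    ring
  rw [show 3*(3*n)+1 = 3*(3*n)+1 from rfl, key (3*n) (3^(n+1)-(n+1)), Polynomial.coeff_add,
    coeff_expand_mul' _ _ (by compute_degree!) (3*n) n 0 (by norm_num) (by omega)
      (by simp [Polynomial.coeff_one, Polynomial.coeff_X, Polynomial.coeff_X_pow]),
    coeff_expand_mul_X3' _ (3*n) (n-1) (by omega),
    ← d_rep n (n+1) hn1, ← f_rep n (n+1) hn1]
  simp [Polynomial.coeff_one, Polynomial.coeff_X, Polynomial.coeff_X_pow]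

lemma recE1 : ((e4 (3*n+1) : ℕ) : ZMod 3) = 0 := by
  have hp : (3:ℕ)^(n+2) = 3*3^(n+1) := by ring
  have hn1 : n+1 ≤ 3^(n+1) := (Nat.lt_pow_self (n := n+1) (by norm_num : 1 < 3)).le
  have hq : ((X+1)^1 * (1-X)^1 : R3) = 1 - X^2 := by ring
  rw [e_rep (3*n+1) (n+2) (by omega),
    coeff_prod_split' (3*(3*n+1)+1) (3^(n+2)-(3*n+2)) (3*n+1) (3*n+1) (3^(n+1)-(n+1)) 1 1 n 1
      (by norm_num) (by norm_num) (by omega) (by omega) (by omega)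
      (by rw [hq]; simp [Polynomial.coeff_one, Polynomial.coeff_X_pow]),
    hq]
  simp [Polynomial.coeff_one, Polynomial.coeff_X_pow]

lemma recE2 : ((e4 (3*n+2) : ℕ) : ZMod 3) = 0 := by
  have hp : (3:ℕ)^(n+2) = 3*3^(n+1) := by ring
  have hn1 : n+1 ≤ 3^(n+1) := (Nat.lt_pow_self (n := n+1) (by norm_num : 1 < 3)).le
  have hq : ((X+1)^1 * (1-X)^0 : R3) = X + 1 := by ring
  rw [e_rep (3*n+2) (n+2) (by omega),
    coeff_prod_split' (3*(3*n+2)+1) (3^(n+2)-(3*n+3)) (3*n+2) (3*n+2) (3^(n+1)-(n+1)) 1 0 n 2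
      (by norm_num) (by norm_num) (by omega) (by omega) (by omega)
      (by rw [hq]; simp [Polynomial.coeff_one, Polynomial.coeff_X]),
    hq]
  simp [Polynomial.coeff_one, Polynomial.coeff_X]

lemma recF0 (hn : 1 ≤ n) : ((h4 (3*n) : ℕ) : ZMod 3) = (h4 n : ZMod 3) := by
  have hp : (3:ℕ)^(n+2) = 3*3^(n+1) := by ring
  have hn1 : n+1 ≤ 3^(n+1) := (Nat.lt_pow_self (n := n+1) (by norm_num : 1 < 3)).le
  have h3 : (3:R3) = 0 := by exact_mod_cast CharP.cast_eq_zero R3 3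
  have hq : ((X+1)^0 * (1-X)^2 : R3) = 1 + X + X^2 := by linear_combination (-(X) : R3) * h3
  rw [f_rep (3*n) (n+2) (by omega),
    coeff_prod_split' (3*(3*n)) (3^(n+2)-(3*n+1)) (3*n-1) (3*n) (3^(n+1)-(n+1)) 0 2 (n-1) 2
      (by norm_num) (by norm_num) (by omega) (by omega) (by omega)
      (by rw [hq]; simp [Polynomial.coeff_one, Polynomial.coeff_X, Polynomial.coeff_X_pow]),
    ← f_rep n (n+1) hn1, hq]
  simp [Polynomial.coeff_one, Polynomial.coeff_X, Polynomial.coeff_X_pow]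

lemma recF1 : ((h4 (3*n+1) : ℕ) : ZMod 3) = (e4 n : ZMod 3) := by
  have hp : (3:ℕ)^(n+2) = 3*3^(n+1) := by ring
  have hn1 : n+1 ≤ 3^(n+1) := (Nat.lt_pow_self (n := n+1) (by norm_num : 1 < 3)).le
  have hq : ((X+1)^0 * (1-X)^1 : R3) = 1 - X := by ring
  rw [f_rep (3*n+1) (n+2) (by omega),
    coeff_prod_split' (3*(3*n+1)) (3^(n+2)-(3*n+2)) (3*n+1-1) (3*n+1) (3^(n+1)-(n+1)) 0 1 n 0
      (by norm_num) (by norm_num) (by omega) (by omega) (by omega)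
      (by rw [hq]; simp [Polynomial.coeff_one, Polynomial.coeff_X]),
    ← e_rep n (n+1) hn1, hq]
  simp [Polynomial.coeff_one, Polynomial.coeff_X]

lemma recF2 : ((h4 (3*n+2) : ℕ) : ZMod 3) = 0 := by
  have hp : (3:ℕ)^(n+2) = 3*3^(n+1) := by ring
  have hn1 : n+1 ≤ 3^(n+1) := (Nat.lt_pow_self (n := n+1) (by norm_num : 1 < 3)).le
  have hq : ((X+1)^0 * (1-X)^0 : R3) = 1 := by ring
  rw [f_rep (3*n+2) (n+2) (by omega),
    coeff_prod_split' (3*(3*n+2)) (3^(n+2)-(3*n+3)) (3*n+2-1) (3*n+2) (3^(n+1)-(n+1)) 0 0 n 1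
      (by norm_num) (by norm_num) (by omega) (by omega) (by omega)
      (by rw [hq]; simp [Polynomial.coeff_one]),
    hq]
  simp [Polynomial.coeff_one]

end recurrences

def P1 (n : ℕ) : Prop := ∃ m : ℕ, n = 3 ^ m
def P12 (n : ℕ) : Prop := ∃ m : ℕ, n = 3 ^ m ∨ n = 2 * 3 ^ m
def P3 (n : ℕ) : Prop := ∃ a b : ℕ, b < a ∧ n = 3 ^ a + 3 ^ b

lemma nt1 (m : ℕ) (hm : 1 ≤ m) : P1 (3*m) ↔ P1 m := by
  constructor
  · rintro ⟨k, hk⟩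
    match k with
    | 0 => rw [pow_zero] at hk; omega
    | k+1 => exact ⟨k, by rw [pow_succ] at hk; omega⟩
  · rintro ⟨k, rfl⟩
    exact ⟨k+1, by rw [pow_succ]; ring⟩

lemma nt2 (m : ℕ) (hm : 1 ≤ m) : P12 (3*m) ↔ P12 m := by
  constructor
  · rintro ⟨k, hk | hk⟩
    · match k with
      | 0 => rw [pow_zero] at hk; omega
      | k+1 => exact ⟨k, Or.inl (by rw [pow_succ] at hk; omega)⟩
    · match k with
      | 0 => rw [pow_zero] at hk; omega
      | k+1 => exact ⟨k, Or.inr (by rw [pow_succ] at hk; omega)⟩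
  · rintro ⟨k, rfl | rfl⟩
    · exact ⟨k+1, Or.inl (by rw [pow_succ]; ring)⟩
    · exact ⟨k+1, Or.inr (by rw [pow_succ]; ring)⟩

lemma nt3 (m : ℕ) (hm : 1 ≤ m) : P3 (3*m) ↔ P3 m := by
  constructor
  · rintro ⟨a, b, hab, hk⟩
    match a, b with
    | a+1, 0 => rw [pow_succ, pow_zero] at hk; omega
    | a+1, b+1 =>
      refine ⟨a, b, by omega, ?_⟩
      rw [pow_succ, pow_succ] at hk; omega
  · rintro ⟨a, b, hab, rfl⟩
    exact ⟨a+1, b+1, by omega, by rw [pow_succ, pow_succ]; ring⟩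

lemma nt4 (m : ℕ) (hm : 1 ≤ m) : ¬ P12 (3*m+1) := by
  rintro ⟨k, hk | hk⟩
  · match k with
    | 0 => rw [pow_zero] at hk; omega
    | k+1 => rw [pow_succ] at hk; omega
  · match k with
    | 0 => rw [pow_zero] at hk; omega
    | k+1 => rw [pow_succ] at hk; omega

lemma nt5 (m : ℕ) : P3 (3*m+1) ↔ P1 m := by
  constructor
  · rintro ⟨a, b, hab, hk⟩
    match a, b with
    | a+1, 0 =>
      refine ⟨a, ?_⟩
      rw [pow_succ, pow_zero] at hk; omega
    | a+1, b+1 => rw [pow_succ, pow_succ] at hk; omega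
  · rintro ⟨k, rfl⟩
    exact ⟨k+1, 0, by omega, by rw [pow_succ, pow_zero]; ring⟩

lemma nt6 (m : ℕ) (hm : 1 ≤ m) : ¬ P12 (3*m+2) := by
  rintro ⟨k, hk | hk⟩
  · match k with
    | 0 => rw [pow_zero] at hk; omega
    | k+1 => rw [pow_succ] at hk; omega
  · match k with
    | 0 => rw [pow_zero] at hk; omega
    | k+1 => rw [pow_succ] at hk; omega

lemma nt7 (m : ℕ) : ¬ P3 (3*m+2) := by
  rintro ⟨a, b, hab, hk⟩
  match a, b with
  | a+1, 0 => rw [pow_succ, pow_zero] at hk; omega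
  | a+1, b+1 => rw [pow_succ, pow_succ] at hk; omega

lemma np1_1 (m : ℕ) (hm : 1 ≤ m) : ¬ P1 (3*m+1) := fun ⟨k, h⟩ => nt4 m hm ⟨k, Or.inl h⟩
lemma np1_2 (m : ℕ) (hm : 1 ≤ m) : ¬ P1 (3*m+2) := fun ⟨k, h⟩ => nt6 m hm ⟨k, Or.inl h⟩
lemma np1_zero2 : ¬ P1 2 := by
  rintro ⟨k, hk⟩
  match k with
  | 0 => simp at hk
  | k+1 => rw [pow_succ] at hk; omega

lemma p3_not_p12 (n : ℕ) (h3 : P3 n) : ¬ P12 n := by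
  obtain ⟨a, b, hab, rfl⟩ := h3
  have hpos : 0 < (3:ℕ)^b := Nat.pow_pos (by norm_num)
  have hba : (3:ℕ)^b < 3^a := Nat.pow_lt_pow_right (by norm_num) hab
  rintro ⟨k, hk | hk⟩
  · rcases le_or_gt k a with h | h
    · have h1 : (3:ℕ)^k ≤ 3^a := Nat.pow_le_pow_right (by norm_num) h
      omega
    · have h1 : (3:ℕ)^(a+1) ≤ 3^k := Nat.pow_le_pow_right (by norm_num) h
      have h2 : (3:ℕ)^(a+1) = 3*3^a := by ring
      omega
  · rcases le_or_gt k b with h | h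
    · have h1 : (3:ℕ)^k ≤ 3^b := Nat.pow_le_pow_right (by norm_num) h
      have h2 : (3:ℕ)^(b+1) ≤ 3^a := Nat.pow_le_pow_right (by norm_num) (by omega)
      have h3 : (3:ℕ)^(b+1) = 3*3^b := by ring
      omega
    · obtain ⟨u, hu⟩ : ∃ u, (3:ℕ)^a = 3^b*(3*u) := by
        refine ⟨3^(a-b-1), ?_⟩
        rw [show (3:ℕ)^b*(3*3^(a-b-1)) = 3^(b+1+(a-b-1)) by rw [pow_add, pow_succ]; ring]
        congr 1; omega
      obtain ⟨v, hv⟩ : ∃ v, (3:ℕ)^k = 3^b*(3*v) := by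
        refine ⟨3^(k-b-1), ?_⟩
        rw [show (3:ℕ)^b*(3*3^(k-b-1)) = 3^(b+1+(k-b-1)) by rw [pow_add, pow_succ]; ring]
        congr 1; omega
      rw [hu, hv] at hk
      have key : (3:ℕ)^b * (3*u+1) = 3^b * (2*(3*v)) := by
        rw [Nat.mul_add, Nat.mul_one]; linarith [hk]
      have key2 : 3*u+1 = 2*(3*v) := Nat.eq_of_mul_eq_mul_left hpos key
      omega

open scoped Classical in
lemma main (n : ℕ) : 1 ≤ n →
    ((f4 n : ZMod 3) = if P12 n then 1 else if P3 n then 2 else 0) ∧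
    ((e4 n : ZMod 3) = 0) ∧
    ((h4 n : ZMod 3) = if P1 n then 1 else 0) ∧
    ((g4 n : ZMod 3) = if P1 n then 2 else 0) := by
  induction n using Nat.strong_induction_on with
  | _ n IH =>
    intro hn
    obtain ⟨m, hm⟩ : ∃ m, n = 3*m ∨ n = 3*m+1 ∨ n = 3*m+2 := ⟨n/3, by omega⟩
    rcases hm with rfl | rfl | rfl
    · -- n = 3m, m ≥ 1
      have hm1 : 1 ≤ m := by omega
      obtain ⟨IH1, IH2, IH3, IH4⟩ := IH m (by omega) hm1
      refine ⟨?_, ?_, ?_, ?_⟩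
      · rw [recC0 m hm1, IH1]
        by_cases h1 : P12 m
        · rw [if_pos h1, if_pos ((nt2 m hm1).mpr h1)]
        · rw [if_neg h1, if_neg (fun h => h1 ((nt2 m hm1).mp h))]
          by_cases h2 : P3 m
          · rw [if_pos h2, if_pos ((nt3 m hm1).mpr h2)]
          · rw [if_neg h2, if_neg (fun h => h2 ((nt3 m hm1).mp h))]
      · rw [recE0 m hm1, IH3, IH4]
        by_cases h : P1 m
        · rw [if_pos h, if_pos h]; decide
        · rw [if_neg h, if_neg h]; decide
      · rw [recF0 m hm1, IH3]
        by_cases h : P1 m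
        · rw [if_pos h, if_pos ((nt1 m hm1).mpr h)]
        · rw [if_neg h, if_neg (fun hh => h ((nt1 m hm1).mp hh))]
      · rw [recD0 m, IH4]
        by_cases h : P1 m
        · rw [if_pos h, if_pos ((nt1 m hm1).mpr h)]
        · rw [if_neg h, if_neg (fun hh => h ((nt1 m hm1).mp hh))]
    · -- n = 3m+1
      rcases Nat.eq_zero_or_pos m with rfl | hm1
      · norm_num
        refine ⟨?_, ?_, ?_, ?_⟩
        · have hp : P12 1 := ⟨0, Or.inl (by norm_num)⟩
          rw [if_pos hp]
          have : f4 1 = 1 := by decide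
          rw [this]; norm_num
        · have : e4 1 = 6 := by decide
          rw [this]; decide
        · have hp : P1 1 := ⟨0, by norm_num⟩
          rw [if_pos hp]
          have : h4 1 = 1 := by decide
          rw [this]; norm_num
        · have hp : P1 1 := ⟨0, by norm_num⟩
          rw [if_pos hp]
          have : g4 1 = 5 := by decide
          rw [this]; decide
      · obtain ⟨IH1, IH2, IH3, IH4⟩ := IH m (by omega) hm1
        refine ⟨?_, ?_, ?_, ?_⟩
        · rw [recC1 m, IH4, if_neg (nt4 m hm1)]
          by_cases h : P1 m
          · rw [if_pos h, if_pos ((nt5 m).mpr h)]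
          · rw [if_neg h, if_neg (fun hh => h ((nt5 m).mp hh))]
        · exact recE1 m
        · rw [recF1 m, IH2, if_neg (np1_1 m hm1)]
        · rw [recD1 m, IH2, if_neg (np1_1 m hm1)]; ring
    · -- n = 3m+2
      rcases Nat.eq_zero_or_pos m with rfl | hm1
      · norm_num
        refine ⟨?_, ?_, ?_, ?_⟩
        · have hp : P12 2 := ⟨0, Or.inr (by norm_num)⟩
          rw [if_pos hp]
          have : f4 2 = 7 := by decide
          rw [this]; decide
        · have : e4 2 = 48 := by decide
          rw [this]; decide
        · rw [if_neg np1_zero2]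
          have : h4 2 = 9 := by decide
          rw [this]; decide
        · rw [if_neg np1_zero2]
          have : g4 2 = 39 := by decide
          rw [this]; decide
      · obtain ⟨IH1, IH2, IH3, IH4⟩ := IH m (by omega) hm1
        refine ⟨?_, ?_, ?_, ?_⟩
        · rw [recC2 m, IH2, if_neg (nt6 m hm1), if_neg (nt7 m)]
        · exact recE2 m
        · rw [recF2 m, if_neg (np1_2 m hm1)]
        · rw [recD2 m, if_neg (np1_2 m hm1)]

lemma mod_eq_of_cast (a r : ℕ) (hr : r < 3) (h : (a : ZMod 3) = (r : ℕ)) : a % 3 = r := by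
  calc a % 3 = ((a : ℕ) : ZMod 3).val := (ZMod.val_natCast 3 a).symm
    _ = ((r : ℕ) : ZMod 3).val := by rw [h]
    _ = r := ZMod.val_natCast_of_lt hr

/-- The Deutsch–Sagan-type congruence for `f₄`. -/
theorem f4_mod_three (n : ℕ) (hn : 1 ≤ n) :
    ((∃ m : ℕ, n = 3 ^ m ∨ n = 2 * 3 ^ m) → f4 n % 3 = 1) ∧
    ((∃ a b : ℕ, b < a ∧ n = 3 ^ a + 3 ^ b) → f4 n % 3 = 2) ∧
    ((¬ (∃ m : ℕ, n = 3 ^ m ∨ n = 2 * 3 ^ m) ∧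
      ¬ (∃ a b : ℕ, b < a ∧ n = 3 ^ a + 3 ^ b)) → f4 n % 3 = 0) := by
  classical
  obtain ⟨h1, -, -, -⟩ := main n hn
  refine ⟨fun h => ?_, fun h => ?_, fun ⟨ha, hb⟩ => ?_⟩
  · have hp : P12 n := h
    rw [if_pos hp] at h1
    exact mod_eq_of_cast _ 1 (by norm_num) (by rw [h1]; norm_num)
  · have hp3 : P3 n := h
    rw [if_neg (p3_not_p12 n hp3), if_pos hp3] at h1
    exact mod_eq_of_cast _ 2 (by norm_num) (by rw [h1]; norm_num)
  · have ha' : ¬ P12 n := ha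
    have hb' : ¬ P3 n := hb
    rw [if_neg ha', if_neg hb'] at h1
    exact mod_eq_of_cast _ 0 (by norm_num) (by rw [h1]; norm_num)
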